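/- Deductive ASPIC⊖ is non-trivial under preferred semantics: for the two argumentation systems AS₁ (with defeasible rules ⇒φ₀, ..., ⇒φ_n over a nonempty atom set Γ = {φ₀,...,φ_n} and no axioms) and AS₂ (with defeasible rules φ₀⇒φ₀, ..., φ_n⇒φ_n over the same atoms, no axioms), which are over the same atoms, the restricted preferred conclusion sets differ: 𝒞_pr(AS₁)|_Γ ≠ 𝒞_pr(AS₂)|_Γ. -/

import Mathlib

namespace JS

inductive Lab : Type
  | IN | OUT | UNDEC
deriving DecidableEq

structure JSBAF (A : Type) where
  att : A → A → Prop
  supp : Set A → A → Prop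
  pref : A → A → Prop

variable {A : Type}

/-- Strict arguments: supported by the empty set or only by strict arguments. -/
inductive Strict (J : JSBAF A) : A → Prop
  | mk (S : Set A) (a : A) (h : J.supp S a) (hS : ∀ b ∈ S, Strict J b) : Strict J a

/-- Structural restrictions on JSBAFs. -/
structure Restr (J : JSBAF A) : Prop where
  finSupp : ∀ S b, J.supp S b → S.Finite
  uniqSupp : ∀ S S' b, J.supp S b → J.supp S' b → S = S'
  acyc : ∀ a, ¬ Relation.TransGen (fun x y => ∃ S, J.supp S y ∧ x ∈ S) a a
  strictUnatt : ∀ a b, Strict J b → ¬ J.att a b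
  prefRefl : ∀ a, J.pref a a
  prefTrans : ∀ a b c, J.pref a b → J.pref b c → J.pref a c
  prefTotal : ∀ a b, J.pref a b ∨ J.pref b a
  strictEq : ∀ a b, Strict J a → Strict J b → J.pref a b
  strictTop : ∀ a b, ¬ Strict J a → Strict J b → J.pref a b ∧ ¬ J.pref b a

def inL (L : A → Lab) : Set A := {a | L a = Lab.IN}
def outL (L : A → Lab) : Set A := {a | L a = Lab.OUT}
def undecL (L : A → Lab) : Set A := {a | L a = Lab.UNDEC}

/-- Definition 2, item 1: legally IN. -/
def legallyIn (J : JSBAF A) (L : A → Lab) (a : A) : Prop :=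
  (∀ b, J.att b a → L b = Lab.OUT) ∧
  ∀ S c, J.supp S c → a ∈ S → (∀ b ∈ S, b ≠ a → J.pref a b) →
    (L c = Lab.IN ∨
     (L c = Lab.UNDEC ∧ ∃ b ∈ S, b ≠ a ∧ (L b = Lab.OUT ∨ L b = Lab.UNDEC)) ∨
     (L c = Lab.OUT ∧
       ((∃ b ∈ S, b ≠ a ∧ L b = Lab.OUT) ∨
        (∃ b₁ ∈ S, ∃ b₂ ∈ S, b₁ ≠ a ∧ b₂ ≠ a ∧ b₁ ≠ b₂ ∧
          L b₁ = Lab.UNDEC ∧ L b₂ = Lab.UNDEC))))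

/-- Definition 2, item 2: legally OUT. -/
def legallyOut (J : JSBAF A) (L : A → Lab) (a : A) : Prop :=
  (∃ b, J.att b a ∧ L b = Lab.IN) ∨
  (∃ (n : ℕ) (S : ℕ → Set A) (b : ℕ → A),
    (∀ i ≤ n, J.supp (S i) (b i)) ∧
    (∀ i < n, b i ∈ S (i + 1)) ∧
    a ∈ S 0 ∧
    (∀ d ∈ S 0, d ≠ a → L d = Lab.IN) ∧
    (∃ c, J.att c (b n) ∧ L c = Lab.IN) ∧
    (∀ i ≤ n, L (b i) = Lab.OUT) ∧
    (∀ i, 1 ≤ i → i ≤ n → ∀ d ∈ S i, d ≠ b (i - 1) → L d = Lab.IN) ∧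
    (∀ d ∈ S 0, d ≠ a → J.pref a d))

/-- Admissible labelings. -/
def Admissible (J : JSBAF A) (L : A → Lab) : Prop :=
  (∀ a, L a = Lab.IN → legallyIn J L a) ∧
  (∀ a, L a = Lab.OUT ↔ legallyOut J L a) ∧
  (∀ a, Strict J a → L a = Lab.IN)

/-- Preferred labelings: maximal admissible w.r.t. inclusion of IN-sets. -/
def Preferred (J : JSBAF A) (L : A → Lab) : Prop :=
  Admissible J L ∧ ∀ L', Admissible J L' → ¬ (inL L ⊂ inL L')

/-- The iterated OUT-sets of the SIM labeling. -/
def simO (J : JSBAF A) : ℕ → Set A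
  | 0 => {a | ∃ b, Strict J b ∧ J.att b a}
  | n + 1 => simO J n ∪
      {a | ∃ S c, J.supp S c ∧ a ∈ S ∧ c ∈ simO J n ∧ ∀ d ∈ S, d ≠ a → Strict J d}

def simIn (J : JSBAF A) : Set A := {a | Strict J a}
def simOut (J : JSBAF A) : Set A := ⋃ n, simO J n

open Classical in
/-- The strict-including-minimal labeling. -/
noncomputable def SIM (J : JSBAF A) : A → Lab := fun a =>
  if Strict J a then Lab.IN else if a ∈ simOut J then Lab.OUT else Lab.UNDEC

/-- The order on labelings. -/
def leL (L₁ L₂ : A → Lab) : Prop := inL L₁ ⊆ inL L₂ ∧ outL L₁ ⊆ outL L₂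

end JS
namespace ASPIC

/-- An underlying logical language: formulas, atoms, interpretations, a classical
negation and conjunction, and the interpolation-style assumption on syntactically
disjoint sets of formulas. -/
structure Logic where
  F : Type
  Atom : Type
  atoms : F → Set Atom
  I : Type
  inhab : Nonempty I
  Models : I → F → Prop
  neg : F → F
  conj : F → F → F
  neg_spec : ∀ i φ, Models i (neg φ) ↔ ¬ Models i φ
  conj_spec : ∀ i φ ψ, Models i (conj φ ψ) ↔ (Models i φ ∧ Models i ψ)
  atoms_neg : ∀ φ, atoms (neg φ) = atoms φ
  atoms_conj : ∀ φ ψ, atoms (conj φ ψ) = atoms φ ∪ atoms ψ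
  interp : ∀ Γ Δ : Set F, (∀ φ ∈ Γ, ∀ ψ ∈ Δ, atoms φ ∩ atoms ψ = ∅) →
    (∃ i, ∀ φ ∈ Γ, Models i φ) → (∃ i, ∀ ψ ∈ Δ, Models i ψ) →
    (∃ i, (∀ φ ∈ Γ, Models i φ) ∧ (∀ ψ ∈ Δ, Models i ψ))

/-- The model-based consequence relation ⊨_C. -/
def Conseq (L : Logic) (Γ : Set L.F) (φ : L.F) : Prop :=
  ∀ i, (∀ ψ ∈ Γ, L.Models i ψ) → L.Models i φ

/-- φ = −ψ: one formula is the negation of the other. -/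
def negOf (L : Logic) (φ ψ : L.F) : Prop := φ = L.neg ψ ∨ ψ = L.neg φ

/-- Conjunction of a nonempty list of formulas: conjL L φ [ψ₁,…] = φ ∧ ψ₁ ∧ … . -/
def conjL (L : Logic) : L.F → List L.F → L.F
  | φ, [] => φ
  | φ, ψ :: l => L.conj φ (conjL L ψ l)

/-- A (defeasible) rule: antecedents and conclusion. -/
abbrev Rule (L : Logic) := List L.F × L.F

/-- An argumentation system of Deductive ASPIC⊖: satisfiable axioms, defeasible rules,
a (partial) naming function and a total preorder on defeasible rules.  The strict rules
are the axiomatic rules together with all consequence-based rules. -/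
structure ASys (L : Logic) where
  AX : Set L.F
  AX_sat : ∃ i, ∀ φ ∈ AX, L.Models i φ
  Rd : Set (Rule L)
  name : Rule L → Option L.F
  rpref : Rule L → Rule L → Prop
  rpref_refl : ∀ r, rpref r r
  rpref_trans : ∀ r s t, rpref r s → rpref s t → rpref r t
  rpref_total : ∀ r s, rpref r s ∨ rpref s r

/-- Top-rule kinds: axiomatic, consequence-based strict, defeasible. -/
inductive RK : Type
  | ax | cb | df
deriving DecidableEq

/-- Argument trees (with the kind of the top rule and the conclusion recorded). -/
inductive Arg (L : Logic) : Type
  | node (k : RK) (subs : List (Arg L)) (concl : L.F)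

def Arg.concl {L : Logic} : Arg L → L.F
  | .node _ _ φ => φ

def Arg.subs {L : Logic} : Arg L → List (Arg L)
  | .node _ s _ => s

def Arg.kind {L : Logic} : Arg L → RK
  | .node k _ _ => k

/-- Well-formed arguments of an argumentation system. -/
inductive Wf (L : Logic) (as : ASys L) : Arg L → Prop
  | ax (φ : L.F) (h : φ ∈ as.AX) : Wf L as (.node .ax [] φ)
  | cb (subs : List (Arg L)) (φ : L.F) (hs : ∀ a ∈ subs, Wf L as a)
      (h : Conseq L {ψ | ∃ a ∈ subs, Arg.concl a = ψ} φ) : Wf L as (.node .cb subs φ)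
  | df (subs : List (Arg L)) (φ : L.F) (hs : ∀ a ∈ subs, Wf L as a)
      (h : (subs.map Arg.concl, φ) ∈ as.Rd) : Wf L as (.node .df subs φ)

/-- Sub-argument relation: `Sub a b` means a is a sub-argument of b. -/
inductive Sub (L : Logic) : Arg L → Arg L → Prop
  | refl (a : Arg L) : Sub L a a
  | step (a b : Arg L) (k : RK) (subs : List (Arg L)) (φ : L.F)
      (hb : b ∈ subs) (h : Sub L a b) : Sub L a (.node k subs φ)

/-- Conclusions of the sub-arguments of a. -/
def SubC (L : Logic) (a : Arg L) : Set L.F := {φ | ∃ b, Sub L b a ∧ Arg.concl b = φ}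

/-- Axiomatic and defeasible sub-arguments. -/
def ADSub (L : Logic) (a : Arg L) : Set (Arg L) := {b | Sub L b a ∧ Arg.kind b ≠ RK.cb}

/-- Conclusions of the axiomatic and defeasible sub-arguments. -/
def ADSubC (L : Logic) (a : Arg L) : Set L.F :=
  {φ | ∃ b, Sub L b a ∧ Arg.kind b ≠ RK.cb ∧ Arg.concl b = φ}

/-- Defeasible rules used in an argument. -/
def DR (L : Logic) (a : Arg L) : Set (Rule L) :=
  {r | ∃ subs, Sub L (Arg.node RK.df subs r.2) a ∧ r.1 = subs.map Arg.concl}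

/-- Strict arguments: no defeasible rules used. -/
def IsStrictArg (L : Logic) (a : Arg L) : Prop := DR L a = ∅

/-- Elitist weakest-link lifting of the rule preorder to arguments (a ⪯_ewl b). -/
def ewl (L : Logic) (as : ASys L) (a b : Arg L) : Prop :=
  (DR L a = ∅ ∧ DR L b = ∅) ∨ ∃ ra ∈ DR L a, ∀ rb ∈ DR L b, as.rpref ra rb

/-- a undercuts b: the conclusion of a is the negation of the name of a defeasible rule
used in b. -/
def Undercuts (L : Logic) (as : ASys L) (a b : Arg L) : Prop :=
  ∃ subs φ, Sub L (Arg.node RK.df subs φ) b ∧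
    ∃ nm, as.name (subs.map Arg.concl, φ) = some nm ∧ negOf L (Arg.concl a) nm

/-- a gen-rebuts b: b is defeasible and the conclusion of a is the negation of a conjunction
of conclusions of sub-arguments of b. -/
def GenRebuts (L : Logic) (a b : Arg L) : Prop :=
  DR L b ≠ ∅ ∧ ∃ (φ : L.F) (l : List L.F),
    (∀ χ ∈ φ :: l, χ ∈ SubC L b) ∧ Arg.concl a = L.neg (conjL L φ l)

/-- a defeats b: a undercuts b, or a gen-rebuts b and a is not strictly weaker than b. -/
def Defeats (L : Logic) (as : ASys L) (a b : Arg L) : Prop :=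
  Undercuts L as a b ∨
    (GenRebuts L a b ∧ ¬ (ewl L as a b ∧ ¬ ewl L as b a))

/-- The strict rules of an argumentation system: axiomatic or consequence-based. -/
def StrictRule (L : Logic) (as : ASys L) (r : Rule L) : Prop :=
  (r.1 = [] ∧ r.2 ∈ as.AX) ∨ Conseq L {φ | φ ∈ r.1} r.2

end ASPIC

namespace ASPIC

/-- The well-formed arguments of an argumentation system. -/
def WfArg (L : Logic) (as : ASys L) : Type := {a : Arg L // Wf L as a}

/-- The JSBAF corresponding to an argumentation system: attacks are defeats, supports are
applications of strict rules, preferences are the elitist weakest-link lifting. -/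
def toJ (L : Logic) (as : ASys L) : JS.JSBAF (WfArg L as) where
  att a b := Defeats L as a.1 b.1
  supp S b := (Arg.kind b.1 = RK.ax ∨ Arg.kind b.1 = RK.cb) ∧
    S = {a : WfArg L as | a.1 ∈ Arg.subs b.1}
  pref a b := ewl L as a.1 b.1

/-- The conclusions of the IN-arguments of a labeling. -/
def concls (L : Logic) (as : ASys L) (Lb : WfArg L as → JS.Lab) : Set L.F :=
  {φ | ∃ a : WfArg L as, Lb a = JS.Lab.IN ∧ Arg.concl a.1 = φ}

/-- The AS is consistent: no two strict arguments have contradictory conclusions. -/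
def ASConsistent (L : Logic) (as : ASys L) : Prop :=
  ¬ ∃ a b : Arg L, Wf L as a ∧ Wf L as b ∧ DR L a = ∅ ∧ DR L b = ∅ ∧
      negOf L (Arg.concl a) (Arg.concl b)

end ASPIC

namespace ASPIC

/-- The preferred conclusion sets of an argumentation system. -/
def Cpr (L : Logic) (as : ASys L) : Set (Set L.F) :=
  {Γ | ∃ Lb : WfArg L as → JS.Lab, JS.Preferred (toJ L as) Lb ∧ Γ = concls L as Lb}

/-- Elementwise restriction of a set of conclusion sets to formulas over a given atom set. -/
def restrict (L : Logic) (C : Set (Set L.F)) (Δ : Set L.Atom) : Set (Set L.F) :=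
  {Γ' | ∃ Γ ∈ C, Γ' = {φ ∈ Γ | L.atoms φ ⊆ Δ}}

end ASPIC

namespace ASPIC

/-- Sub-arguments of well-formed arguments are well-formed. -/
lemma wf_of_sub (L : Logic) (as : ASys L) {a b : Arg L} (h : Sub L b a)
    (ha : Wf L as a) : Wf L as b := by
  induction h with
  | refl => exact ha
  | step c d k subs hmem hd ih =>
    apply ih
    cases ha with
    | ax φ h => exact absurd hmem List.not_mem_nil
    | cb subs φ hs h => exact hs _ hmem
    | df subs φ hs h => exact hs _ hmem

/-- If an interpretation validates every defeasible rule and there are no axioms,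
it models the conclusion of every well-formed argument. -/
lemma models_concl (L : Logic) (as : ASys L) (i : L.I)
    (hAX : as.AX = ∅)
    (hR : ∀ r ∈ as.Rd, (∀ ψ ∈ r.1, L.Models i ψ) → L.Models i r.2)
    {a : Arg L} (ha : Wf L as a) : L.Models i (Arg.concl a) := by
  induction ha with
  | ax φ h => rw [hAX] at h; exact absurd h (Set.notMem_empty _)
  | cb subs φ hs h ih =>
    exact h i (by rintro ψ ⟨b, hb, rfl⟩; exact ih b hb)
  | df subs φ hs h ih =>
    refine hR _ h ?_
    intro ψ hψ
    rw [List.mem_map] at hψ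
    obtain ⟨b, hb, rfl⟩ := hψ
    exact ih b hb

/-- Joint satisfiability of finitely many distinct atoms. -/
lemma joint_sat (L : Logic) (atomF : L.Atom → L.F)
    (hatomF : ∀ p, L.atoms (atomF p) = {p})
    (hsat : ∀ p, ∃ i, L.Models i (atomF p))
    (ps : Finset L.Atom) : ∃ i, ∀ p ∈ ps, L.Models i (atomF p) := by
  classical
  induction ps using Finset.induction with
  | empty => obtain ⟨i⟩ := L.inhab; exact ⟨i, fun p hp => absurd hp (by simp)⟩
  | @insert p s hp ih =>
    obtain ⟨i, hi⟩ := ih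
    obtain ⟨j, hj⟩ := hsat p
    obtain ⟨k, hk1, hk2⟩ := L.interp {φ | ∃ q ∈ s, φ = atomF q} {atomF p}
      (by
        rintro φ ⟨q, hq, rfl⟩ ψ hψ
        rw [Set.mem_singleton_iff] at hψ; subst hψ
        rw [hatomF, hatomF]
        have : q ≠ p := fun h => hp (h ▸ hq)
        exact Set.singleton_inter_eq_empty.mpr (by simp [this]))
      ⟨i, by rintro φ ⟨q, hq, rfl⟩; exact hi q hq⟩
      ⟨j, by rintro ψ hψ; rw [Set.mem_singleton_iff] at hψ; exact hψ ▸ hj⟩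
    refine ⟨k, fun q hq => ?_⟩
    rcases Finset.mem_insert.mp hq with h | h
    · exact h ▸ hk2 _ rfl
    · exact hk1 _ ⟨q, h, rfl⟩

lemma models_conjL (L : Logic) (i : L.I) (φ : L.F) (l : List L.F)
    (h : ∀ χ ∈ φ :: l, L.Models i χ) : L.Models i (conjL L φ l) := by
  induction l generalizing φ with
  | nil => exact h φ (by simp)
  | cons ψ l ih =>
    rw [conjL, L.conj_spec]
    refine ⟨h φ (by simp), ih ψ ?_⟩
    intro χ hχ
    apply h
    rcases List.mem_cons.mp hχ with h' | h' <;> simp [h']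

end ASPIC

open ASPIC in
/-- Deductive ASPIC⊖ is non-trivial under preferred semantics: for a nonempty
finite set of atoms ps, the argumentation system AS₁ with defeasible rules ⇒φ_p (p ∈ ps) and no
axioms, and the argumentation system AS₂ with defeasible rules φ_p ⇒ φ_p (p ∈ ps) and no axioms,
have different preferred conclusion sets when restricted to ps. -/
theorem nontrivial_preferred (L : Logic)
    (atomF : L.Atom → L.F)
    (hatomF : ∀ p, L.atoms (atomF p) = {p})
    (hsat : ∀ p, ∃ i, L.Models i (atomF p))
    (hnontaut : ∀ p, ∃ i, ¬ L.Models i (atomF p))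
    (ps : Finset L.Atom) (hne : ps.Nonempty)
    (as₁ as₂ : ASys L)
    (h1AX : as₁.AX = ∅)
    (h1Rd : as₁.Rd = {r | ∃ p ∈ ps, r = ([], atomF p)})
    (h1nm : as₁.name = fun _ => none)
    (h2AX : as₂.AX = ∅)
    (h2Rd : as₂.Rd = {r | ∃ p ∈ ps, r = ([atomF p], atomF p)})
    (h2nm : as₂.name = fun _ => none) :
    restrict L (Cpr L as₁) (↑ps) ≠ restrict L (Cpr L as₂) (↑ps) := by
  classical
  obtain ⟨p₀, hp₀⟩ := hne
  obtain ⟨i₀, hi₀⟩ := joint_sat L atomF hatomF hsat ps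
  -- every well-formed AS₁ argument's conclusion is modeled by i₀
  have hM1 : ∀ {a : Arg L}, Wf L as₁ a → L.Models i₀ (Arg.concl a) := by
    intro a ha
    refine models_concl L as₁ i₀ h1AX ?_ ha
    intro r hr _
    rw [h1Rd] at hr
    obtain ⟨p, hp, rfl⟩ := hr
    exact hi₀ p hp
  -- there are no attacks in the JSBAF of AS₁
  have hnoatt : ∀ a b : WfArg L as₁, ¬ (toJ L as₁).att a b := by
    intro a b hab
    rcases hab with huc | ⟨⟨_, φ, l, hχ, hconcl⟩, _⟩
    · obtain ⟨subs, φ, _, nm, hnm, _⟩ := huc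
      rw [h1nm] at hnm; exact absurd hnm (by simp)
    · have h1 : L.Models i₀ (Arg.concl a.1) := hM1 a.2
      rw [hconcl, L.neg_spec] at h1
      exact h1 (models_conjL L i₀ φ l (fun χ hχ' => by
        obtain ⟨c, hc, rfl⟩ := hχ χ hχ'
        exact hM1 (wf_of_sub L as₁ hc b.2)))
  -- the all-IN labeling is admissible, hence preferred
  set Lb1 : WfArg L as₁ → JS.Lab := fun _ => JS.Lab.IN with hLb1
  have hadm : JS.Admissible (toJ L as₁) Lb1 := by
    refine ⟨?_, ?_, fun a _ => rfl⟩
    · intro a _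
      constructor
      · intro b hb; exact absurd hb (hnoatt b a)
      · intro S c _ _ _; left; rfl
    · intro a
      constructor
      · intro h; exact absurd h (by simp [hLb1])
      · rintro (⟨b, hb, _⟩ | ⟨n, S, b, _, _, _, _, ⟨c, hc, _⟩, _⟩)
        · exact absurd hb (hnoatt b a)
        · exact absurd hc (hnoatt c (b n))
  have hpref : JS.Preferred (toJ L as₁) Lb1 := by
    refine ⟨hadm, ?_⟩
    intro L' _ hss
    have huniv : JS.inL Lb1 = Set.univ := Set.eq_univ_of_forall (fun a => rfl)
    rw [huniv] at hss
    exact hss.not_subset (Set.subset_univ _)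
  -- a well-formed AS₁ argument concluding atomF p₀
  have hwfA : Wf L as₁ (Arg.node RK.df [] (atomF p₀)) := by
    apply Wf.df
    · intro a ha; exact absurd ha List.not_mem_nil
    · rw [h1Rd]; exact ⟨p₀, hp₀, by simp⟩
  intro heq
  have hmem : ({φ ∈ concls L as₁ Lb1 | L.atoms φ ⊆ ↑ps} : Set L.F) ∈
      restrict L (Cpr L as₁) ↑ps := ⟨_, ⟨Lb1, hpref, rfl⟩, rfl⟩
  rw [heq] at hmem
  obtain ⟨Γ, ⟨Lb2, _, rfl⟩, hΓ⟩ := hmem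
  have hin : atomF p₀ ∈ {φ ∈ concls L as₁ Lb1 | L.atoms φ ⊆ ↑ps} := by
    refine ⟨⟨⟨_, hwfA⟩, rfl, rfl⟩, ?_⟩
    rw [hatomF]; simpa using hp₀
  rw [hΓ] at hin
  obtain ⟨⟨a, _, hca⟩, _⟩ := hin
  obtain ⟨j, hj⟩ := hnontaut p₀
  have hm : L.Models j (Arg.concl a.1) := by
    refine models_concl L as₂ j h2AX ?_ a.2
    intro r hr hpr
    rw [h2Rd] at hr
    obtain ⟨p, hp, rfl⟩ := hr
    exact hpr _ (by simp)
  rw [hca] at hm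
  exact hj hm
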